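/- In any triangulated category, an object that is both hopfian and exotic is a zero object. -/

import Mathlib

open CategoryTheory Limits Pretriangulated

variable {C : Type*} [Category C] [Preadditive C] [HasZeroObject C]
  [HasShift C ℤ] [∀ n : ℤ, (shiftFunctor C n).Additive] [Pretriangulated C]
  [IsTriangulated C]

/-- A Hopf map for `A`: a morphism `η : ΣA ⟶ A` with `2η = 0` such that for some exact
triangle `A →2 A →i C →q ΣA` one has `iηq = 2·1_C`. -/
def IsHopfMap (A : C) (η : A⟦(1 : ℤ)⟧ ⟶ A) : Prop :=
  (2 : ℤ) • η = 0 ∧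
  ∃ (Cone : C) (i : A ⟶ Cone) (q : Cone ⟶ A⟦(1 : ℤ)⟧),
    Triangle.mk ((2 : ℤ) • 𝟙 A) i q ∈ (distTriang C) ∧
      q ≫ η ≫ i = (2 : ℤ) • 𝟙 Cone

/-- An object admitting a Hopf map. -/
def IsHopfian (A : C) : Prop := ∃ η : A⟦(1 : ℤ)⟧ ⟶ A, IsHopfMap A η

/-- An exotic object: one fitting in an exact triangle `E →2 E →2 E →h ΣE`. -/
def IsExotic (E : C) : Prop :=
  ∃ h : E ⟶ E⟦(1 : ℤ)⟧,
    Triangle.mk ((2 : ℤ) • 𝟙 E) ((2 : ℤ) • 𝟙 E) h ∈ distTriang C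

/-- An object that is both hopfian and exotic is a zero object. -/
theorem stmt_13 (A : C) (hA : IsHopfian A) (hE : IsExotic A) : IsZero A := by
  obtain ⟨η, hη2, Cn, i, q, hTri, hqi⟩ := hA
  obtain ⟨h, hTe⟩ := hE
  obtain ⟨φ, hc2, hc3⟩ : ∃ φ : Cn ⟶ A, i ≫ φ = 𝟙 A ≫ ((2 : ℤ) • 𝟙 A) ∧
      q ≫ (shiftFunctor C (1 : ℤ)).map (𝟙 A) = φ ≫ h :=
    complete_distinguished_triangle_morphism _ _ hTri hTe
    (𝟙 A) (𝟙 A) (by exact (Category.comp_id _).trans (Category.id_comp _).symm)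
  rw [Category.id_comp] at hc2
  have φiso : IsIso φ := by
    have : IsIso (TriangleMorphism.mk (T₁ := Triangle.mk ((2 : ℤ) • 𝟙 A) i q)
        (T₂ := Triangle.mk ((2 : ℤ) • 𝟙 A) ((2 : ℤ) • 𝟙 A) h)
        (𝟙 A) (𝟙 A) φ ((Category.comp_id _).trans (Category.id_comp _).symm) (hc2.trans (Category.id_comp _).symm) hc3).hom₃ :=
      isIso₃_of_isIso₁₂ _ hTri hTe (IsIso.id A) (IsIso.id A)
    exact this
  have h2φ : (2 : ℤ) • φ = 0 := by
    calc (2 : ℤ) • φ = ((2 : ℤ) • 𝟙 Cn) ≫ φ := by simp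
    _ = (q ≫ η ≫ i) ≫ φ := by rw [hqi]
    _ = q ≫ η ≫ (i ≫ φ) := by simp
    _ = q ≫ (((2 : ℤ) • η) ≫ 𝟙 A) := by rw [hc2]; simp
    _ = 0 := by rw [hη2]; simp
  have h2A : (2 : ℤ) • 𝟙 A = 0 := by
    have := congrArg (fun f => inv φ ≫ f) h2φ
    simpa using this
  obtain ⟨g, hg⟩ := Triangle.coyoneda_exact₂ _ hTe (𝟙 A) ((Category.id_comp _).trans h2A)
  have hid : 𝟙 A = 0 := by
    rw [hg]; show g ≫ ((2 : ℤ) • 𝟙 A) = 0; exact (congrArg (fun f : A ⟶ A => g ≫ f) h2A).trans Limits.comp_zero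
  exact (Limits.IsZero.iff_id_eq_zero A).2 hid
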